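/- arXiv:2304.10350 — 7 statements merged into one kernel-verified Lean document; each statement's English description precedes it below -/
import Mathlib

section
/- For positive reals l, r, k' with l ≤ r, the quantity (l+r)·log(k'/(l+r)) − r·log(k'/r) − l·log(k'/l) is at most −l. -/
theorem stmt_1 (l r k' : ℝ) (hl : 0 < l) (hr : 0 < r) (hk : 0 < k') (hlr : l ≤ r) :
    (l + r) * Real.log (k' / (l + r)) - r * Real.log (k' / r) - l * Real.log (k' / l) ≤ -l := by
  have hlrpos : 0 < l + r := by linarith
  have h1 : Real.log (l / (l + r)) ≤ l / (l + r) - 1 :=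
    Real.log_le_sub_one_of_pos (div_pos hl hlrpos)
  have h2 : Real.log (r / (l + r)) ≤ r / (l + r) - 1 :=
    Real.log_le_sub_one_of_pos (div_pos hr hlrpos)
  have e : (l + r) * Real.log (k' / (l + r)) - r * Real.log (k' / r) - l * Real.log (k' / l)
      = l * Real.log (l / (l + r)) + r * Real.log (r / (l + r)) := by
    rw [Real.log_div hk.ne' hlrpos.ne', Real.log_div hk.ne' hr.ne',
      Real.log_div hk.ne' hl.ne', Real.log_div hl.ne' hlrpos.ne',
      Real.log_div hr.ne' hlrpos.ne']
    ring
  rw [e]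
  have hb : l * Real.log (l / (l + r)) + r * Real.log (r / (l + r))
      ≤ l * (l / (l + r) - 1) + r * (r / (l + r) - 1) := by
    gcongr
  have : l * (l / (l + r) - 1) + r * (r / (l + r) - 1) ≤ -l := by
    rw [div_sub_one hlrpos.ne', div_sub_one hlrpos.ne', ← mul_div_assoc, ← mul_div_assoc,
      ← add_div, div_le_iff₀ hlrpos]
    nlinarith
  linarith
end

section
/- Let I and J be two finite sets of consecutive integers (segments) that overlap, and suppose each is δ-monochromatic: strictly more than δ|I| elements of I have color c_I and strictly more than δ|J| elements of J have color c_J, for some coloring of the integers. If |I ∩ J| ≥ α·max{|I|, |J|} and δ ≥ 1 − α/2 (with 0 < α ≤ 1, 0 < δ < 1), then c_I = c_J. -/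
lemma count_aux (p : ℤ → Prop) [DecidablePred p]
    (I J : Finset ℤ) :
    (I.filter p).card + (I ∩ J).card ≤ I.card + ((I ∩ J).filter p).card := by
  have hsub : I.filter p ∪ (I ∩ J) ⊆ I := by
    intro x hx
    rcases Finset.mem_union.1 hx with h | h
    · exact Finset.mem_of_mem_filter x h
    · exact (Finset.mem_inter.1 h).1
  have hcap : I.filter p ∩ (I ∩ J) = (I ∩ J).filter p := by
    ext x
    simp only [Finset.mem_inter, Finset.mem_filter]
    tauto
  have := Finset.card_union_add_card_inter (I.filter p) (I ∩ J)
  rw [hcap] at this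
  have h2 := Finset.card_le_card hsub
  omega

theorem stmt_3 {C : Type*} [DecidableEq C] (col : ℤ → C) (cI cJ : C) (δ α : ℝ)
    (a b a' b' : ℤ) (I J : Finset ℤ) (hI : I = Finset.Icc a b) (hJ : J = Finset.Icc a' b')
    (hoverlap : (I ∩ J).Nonempty)
    (hα0 : 0 < α) (hα1 : α ≤ 1) (hδ0 : 0 < δ) (hδ1 : δ < 1)
    (hmonoI : ((I.filter (fun x => col x = cI)).card : ℝ) > δ * I.card)
    (hmonoJ : ((J.filter (fun x => col x = cJ)).card : ℝ) > δ * J.card)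
    (hinter : ((I ∩ J).card : ℝ) ≥ α * max (I.card : ℝ) (J.card : ℝ))
    (hδα : δ ≥ 1 - α / 2) :
    cI = cJ := by
  by_contra hne
  set K := I ∩ J with hK
  -- counting lemmas
  have h1 := count_aux (fun x => col x = cI) I J
  have h2 := count_aux (fun x => col x = cJ) J I
  rw [Finset.inter_comm J I] at h2
  -- disjointness inside K
  have hdisj : Disjoint (K.filter (fun x => col x = cI)) (K.filter (fun x => col x = cJ)) := by
    rw [Finset.disjoint_left]
    intro x hx1 hx2
    exact hne ((Finset.mem_filter.1 hx1).2.symm.trans (Finset.mem_filter.1 hx2).2)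
  have hle : (K.filter (fun x => col x = cI)).card + (K.filter (fun x => col x = cJ)).card
      ≤ K.card := by
    rw [← Finset.card_union_of_disjoint hdisj]
    exact Finset.card_le_card (Finset.union_subset (Finset.filter_subset _ _)
      (Finset.filter_subset _ _))
  -- pass to reals
  have h1' : ((I.filter (fun x => col x = cI)).card : ℝ) + K.card
      ≤ I.card + (K.filter (fun x => col x = cI)).card := by exact_mod_cast h1
  have h2' : ((J.filter (fun x => col x = cJ)).card : ℝ) + K.card
      ≤ J.card + (K.filter (fun x => col x = cJ)).card := by exact_mod_cast h2
  have hle' : ((K.filter (fun x => col x = cI)).card : ℝ)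
      + (K.filter (fun x => col x = cJ)).card ≤ K.card := by exact_mod_cast hle
  have hmaxI : (I.card : ℝ) ≤ max (I.card : ℝ) (J.card : ℝ) := le_max_left _ _
  have hmaxJ : (J.card : ℝ) ≤ max (I.card : ℝ) (J.card : ℝ) := le_max_right _ _
  nlinarith [hmonoI, hmonoJ, hinter, hδα]
end

section
/- Let I_1, …, I_m be intervals, each δ-monochromatic for the same color c (i.e., the number of color-c elements in I_i is at least δ|I_i|), such that I = ⋃_i I_i is a single contiguous segment. Then I is δ/(2−δ)-monochromatic for c, i.e., the number of color-c elements in I is at least (δ/(2−δ))·|I|. -/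
private lemma cnt_split {C : Type*} [DecidableEq C] (col : ℤ → C) (c : C) (x y z : ℤ)
    (h1 : x ≤ y + 1) (h2 : y ≤ z) :
    ((Finset.Icc x z).filter (fun t => col t = c)).card
      = ((Finset.Icc x y).filter (fun t => col t = c)).card
        + ((Finset.Icc (y+1) z).filter (fun t => col t = c)).card := by
  have hu : Finset.Icc x z = Finset.Icc x y ∪ Finset.Icc (y+1) z := by
    ext t; simp only [Finset.mem_Icc, Finset.mem_union]; omega
  have hd : Disjoint (Finset.Icc x y) (Finset.Icc (y+1) z) := by
    rw [Finset.disjoint_left]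
    intro t ht ht'
    simp only [Finset.mem_Icc] at ht ht'
    omega
  rw [hu, Finset.filter_union,
    Finset.card_union_of_disjoint (Finset.disjoint_filter_filter hd)]

private lemma card_Icc_real (x y : ℤ) (h : x ≤ y + 1) :
    ((Finset.Icc x y).card : ℝ) = (y : ℝ) + 1 - x := by
  have h1 : ((Finset.Icc x y).card : ℤ) = y + 1 - x := by
    rw [Int.card_Icc]; omega
  have h2 : ((Finset.Icc x y).card : ℝ) = ((y + 1 - x : ℤ) : ℝ) := by exact_mod_cast h1
  rw [h2]; push_cast; ring

private lemma aux_cover {C : Type*} [DecidableEq C] (col : ℤ → C) (c : C) (δ : ℝ)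
    (hδ0 : 0 < δ) (hδ1 : δ ≤ 1) {m : ℕ} (a b : Fin m → ℤ) (hi : ℤ)
    (hmono : ∀ i, δ * ((Finset.Icc (a i) (b i)).card : ℝ) ≤
      (((Finset.Icc (a i) (b i)).filter (fun x => col x = c)).card : ℝ)) :
    ∀ n : ℕ, ∀ u v : ℤ, u ≤ v → hi - v ≤ (n : ℤ) →
      (∀ x : ℤ, v < x → x ≤ hi → ∃ i, a i ≤ x ∧ x ≤ b i ∧ u < a i ∧ b i ≤ hi) →
      δ * ((hi : ℝ) - v) ≤
        (1 - δ) * (((Finset.Icc (u+1) v).filter (fun x => col x = c)).card : ℝ)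
        + (2 - δ) * (((Finset.Icc (v+1) hi).filter (fun x => col x = c)).card : ℝ) := by
  intro n
  induction n with
  | zero =>
    intro u v _ hn _
    have hvr : (hi : ℝ) - v ≤ 0 := by
      have : hi ≤ v := by omega
      have : (hi : ℝ) ≤ v := by exact_mod_cast this
      linarith
    have c1 : (0:ℝ) ≤ (((Finset.Icc (u+1) v).filter (fun x => col x = c)).card : ℝ) :=
      Nat.cast_nonneg _
    have c2 : (0:ℝ) ≤ (((Finset.Icc (v+1) hi).filter (fun x => col x = c)).card : ℝ) :=
      Nat.cast_nonneg _
    nlinarith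
  | succ n ih =>
    intro u v huv hn hcov
    by_cases hvh : hi ≤ v
    · have hvr : (hi : ℝ) - v ≤ 0 := by
        have : (hi : ℝ) ≤ v := by exact_mod_cast hvh
        linarith
      have c1 : (0:ℝ) ≤ (((Finset.Icc (u+1) v).filter (fun x => col x = c)).card : ℝ) :=
        Nat.cast_nonneg _
      have c2 : (0:ℝ) ≤ (((Finset.Icc (v+1) hi).filter (fun x => col x = c)).card : ℝ) :=
        Nat.cast_nonneg _
      nlinarith
    · push_neg at hvh
      obtain ⟨i1, hi1a, hi1b, hi1u, hi1h⟩ := hcov (v+1) (by omega) (by omega)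
      set s : Finset (Fin m) :=
        Finset.univ.filter (fun i => a i ≤ v+1 ∧ v+1 ≤ b i ∧ u < a i ∧ b i ≤ hi) with hs
      have hne : s.Nonempty := ⟨i1, by simp [hs, hi1a, hi1b, hi1u, hi1h]; omega⟩
      obtain ⟨i0, hi0mem, hi0max⟩ := Finset.exists_max_image s b hne
      have hi0 : a i0 ≤ v+1 ∧ v+1 ≤ b i0 ∧ u < a i0 ∧ b i0 ≤ hi := by
        simpa [hs] using hi0mem
      obtain ⟨hA, hB, hAu, hBh⟩ := hi0
      set A := a i0
      set B := b i0
      -- counting quantities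
      set P := (((Finset.Icc (u+1) v).filter (fun x => col x = c)).card : ℝ) with hP
      set Q := (((Finset.Icc (v+1) B).filter (fun x => col x = c)).card : ℝ) with hQ
      set R := (((Finset.Icc (B+1) hi).filter (fun x => col x = c)).card : ℝ) with hR
      set S := (((Finset.Icc A v).filter (fun x => col x = c)).card : ℝ) with hS
      set T := (((Finset.Icc (v+1) hi).filter (fun x => col x = c)).card : ℝ) with hT
      -- hmono for i0 with split
      have hsplit1 : (((Finset.Icc A B).filter (fun x => col x = c)).card : ℝ) = S + Q := by
        rw [cnt_split col c A v B hA (by omega)]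
        push_cast; ring
      have hcard : ((Finset.Icc A B).card : ℝ) = (B : ℝ) + 1 - A :=
        card_Icc_real A B (by omega)
      have h1 : δ * ((B : ℝ) + 1 - A) ≤ S + Q := by
        have := hmono i0
        rw [hcard, hsplit1] at this
        exact this
      have hSle : S ≤ (v : ℝ) + 1 - A := by
        have h2 : ((Finset.Icc A v).filter (fun x => col x = c)).card ≤ (Finset.Icc A v).card :=
          Finset.card_filter_le _ _
        have h3 : ((Finset.Icc A v).card : ℝ) = (v : ℝ) + 1 - A := card_Icc_real A v hA
        rw [hS, ← h3]
        exact_mod_cast h2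
      have hSP : S ≤ P := by
        have : Finset.Icc A v ⊆ Finset.Icc (u+1) v :=
          Finset.Icc_subset_Icc_left (by omega)
        rw [hS, hP]
        exact_mod_cast Finset.card_le_card (Finset.filter_subset_filter _ this)
      have hTQR : T = Q + R := by
        rw [hT, hQ, hR, cnt_split col c (v+1) B hi (by omega) hBh]
        push_cast; ring
      -- induction hypothesis at (v, B)
      have hih : δ * ((hi : ℝ) - B) ≤ (1 - δ) * Q + (2 - δ) * R := by
        apply ih v B (by omega) (by omega)
        intro x hx1 hx2
        obtain ⟨j, hj1, hj2, hj3, hj4⟩ := hcov x (by omega) hx2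
        refine ⟨j, hj1, hj2, ?_, hj4⟩
        by_contra hcon
        push_neg at hcon
        have hjs : j ∈ s := by
          simp only [hs, Finset.mem_filter, Finset.mem_univ, true_and]
          exact ⟨by omega, by omega, hj3, hj4⟩
        have := hi0max j hjs
        omega
      -- cast integer facts to ℝ
      have hAv : (A : ℝ) ≤ (v : ℝ) + 1 := by exact_mod_cast hA
      have hvB : (v : ℝ) + 1 ≤ (B : ℝ) := by exact_mod_cast hB
      have hBhr : (B : ℝ) ≤ (hi : ℝ) := by exact_mod_cast hBh
      have hmul : δ * S ≤ δ * ((v : ℝ) + 1 - A) :=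
        mul_le_mul_of_nonneg_left hSle hδ0.le
      have hmul2 : (1 - δ) * S ≤ (1 - δ) * P :=
        mul_le_mul_of_nonneg_left hSP (by linarith)
      have hdT : δ * T = δ * Q + δ * R := by rw [hTQR]; ring
      linarith

theorem stmt_5 {C : Type*} [DecidableEq C] (col : ℤ → C) (c : C) (δ : ℝ) (m : ℕ) (hm : 0 < m)
    (a b : Fin m → ℤ) (lo hi : ℤ)
    (hδ0 : 0 < δ) (hδ1 : δ ≤ 1)
    (hunion : Finset.Icc lo hi = (Finset.univ : Finset (Fin m)).biUnion
      (fun i => Finset.Icc (a i) (b i)))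
    (hmono : ∀ i, δ * ((Finset.Icc (a i) (b i)).card : ℝ) ≤
      (((Finset.Icc (a i) (b i)).filter (fun x => col x = c)).card : ℝ)) :
    δ * ((Finset.Icc lo hi).card : ℝ) ≤
      (2 - δ) * (((Finset.Icc lo hi).filter (fun x => col x = c)).card : ℝ) := by
  by_cases hlh : lo ≤ hi
  · have hsub : ∀ i : Fin m, Finset.Icc (a i) (b i) ⊆ Finset.Icc lo hi := by
      intro i
      rw [hunion]
      exact Finset.subset_biUnion_of_mem (fun i => Finset.Icc (a i) (b i)) (Finset.mem_univ i)
    have hcov : ∀ x : ℤ, lo - 1 < x → x ≤ hi → ∃ i, a i ≤ x ∧ x ≤ b i ∧ lo - 1 < a i ∧ b i ≤ hi := by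
      intro x hx1 hx2
      have hx : x ∈ Finset.Icc lo hi := Finset.mem_Icc.mpr ⟨by omega, hx2⟩
      rw [hunion] at hx
      obtain ⟨i, _, hxi⟩ := Finset.mem_biUnion.mp hx
      rw [Finset.mem_Icc] at hxi
      have hai : a i ∈ Finset.Icc lo hi := hsub i (Finset.mem_Icc.mpr ⟨le_refl _, by omega⟩)
      have hbi : b i ∈ Finset.Icc lo hi := hsub i (Finset.mem_Icc.mpr ⟨by omega, le_refl _⟩)
      rw [Finset.mem_Icc] at hai hbi
      exact ⟨i, hxi.1, hxi.2, by omega, hbi.2⟩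
    have key := aux_cover col c δ hδ0 hδ1 a b hi hmono (hi - lo + 1).toNat (lo - 1) (lo - 1)
      (le_refl _) (by omega) hcov
    have heq : (lo - 1 + 1 : ℤ) = lo := by ring
    rw [heq] at key
    have h0 : (((Finset.Icc lo (lo - 1)).filter (fun x => col x = c)).card : ℝ) = 0 := by
      rw [Finset.Icc_eq_empty (by omega : ¬ lo ≤ lo - 1)]; simp
    rw [h0, mul_zero, zero_add] at key
    have hcard : ((Finset.Icc lo hi).card : ℝ) = (hi : ℝ) + 1 - lo := card_Icc_real lo hi (by omega)
    rw [hcard]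
    have : (hi : ℝ) - (lo - 1 : ℤ) = (hi : ℝ) + 1 - lo := by push_cast; ring
    rw [this] at key
    exact key
  · push_neg at hlh
    have hempty : Finset.Icc lo hi = (∅ : Finset ℤ) := Finset.Icc_eq_empty (by omega)
    rw [hempty]
    simp
end

section
/- Let smin(x) = −ln(Σ_i e^{−x_i}) and let ∇smin(x)_i = e^{−x_i}/Σ_j e^{−x_j}. For all vectors x, ℓ ∈ ℝ^n with x ≥ 0, 0 ≤ ℓ_i ≤ 1 for all i, we have smin(x+ℓ) − smin(x) ≥ (1/2)·∇smin(x)ᵀℓ. -/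
lemma aux_exp_half (t : ℝ) (h0 : 0 ≤ t) (h1 : t ≤ 1) :
    t / 2 ≤ 1 - Real.exp (-t) := by
  have h := Real.add_one_le_exp t
  have hp : 0 < Real.exp (-t) := Real.exp_pos _
  have he : Real.exp (-t) * Real.exp t = 1 := by
    rw [← Real.exp_add]; simp
  nlinarith [mul_le_mul_of_nonneg_left h hp.le]

theorem stmt_8 (n : ℕ) (hn : 0 < n) (x ℓ : Fin n → ℝ)
    (hx : ∀ i, 0 ≤ x i) (hℓ0 : ∀ i, 0 ≤ ℓ i) (hℓ1 : ∀ i, ℓ i ≤ 1) :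
    (-Real.log (∑ i, Real.exp (-(x i + ℓ i)))) - (-Real.log (∑ i, Real.exp (-x i))) ≥
      (1 / 2) * ∑ i, (Real.exp (-x i) / ∑ j, Real.exp (-x j)) * ℓ i := by
  have hne : (Finset.univ : Finset (Fin n)).Nonempty := by
    simp [Finset.univ_nonempty_iff, Fin.pos_iff_nonempty.mp hn]
  have hS : 0 < ∑ j, Real.exp (-x j) :=
    Finset.sum_pos (fun i _ => Real.exp_pos _) hne
  set S := ∑ j, Real.exp (-x j) with hSdef
  set z := ∑ i, (Real.exp (-x i) / S) * (1 - Real.exp (-(ℓ i))) with hz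
  have hT : ∑ i, Real.exp (-(x i + ℓ i)) = S * (1 - z) := by
    rw [hz, mul_sub, mul_one, Finset.mul_sum, hSdef, ← Finset.sum_sub_distrib]
    apply Finset.sum_congr rfl
    intro i _
    have : Real.exp (-(x i + ℓ i)) = Real.exp (-x i) * Real.exp (-(ℓ i)) := by
      rw [← Real.exp_add]; ring_nf
    rw [this]
    field_simp
    ring
  have hT0 : 0 < ∑ i, Real.exp (-(x i + ℓ i)) :=
    Finset.sum_pos (fun i _ => Real.exp_pos _) hne
  have h1z : 0 < 1 - z := by
    rw [hT] at hT0
    by_contra h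
    push_neg at h
    nlinarith
  have hlog : Real.log (∑ i, Real.exp (-(x i + ℓ i))) = Real.log S + Real.log (1 - z) := by
    rw [hT, Real.log_mul hS.ne' h1z.ne']
  have hlogz : Real.log (1 - z) ≤ -z := by
    have : 1 - z ≤ Real.exp (-z) := by
      have := Real.add_one_le_exp (-z); linarith
    calc Real.log (1 - z) ≤ Real.log (Real.exp (-z)) :=
          Real.log_le_log h1z this
      _ = -z := Real.log_exp _
  have hz2 : (1 / 2) * ∑ i, (Real.exp (-x i) / S) * ℓ i ≤ z := by
    rw [hz, Finset.mul_sum]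
    apply Finset.sum_le_sum
    intro i _
    have hp : 0 ≤ Real.exp (-x i) / S := div_nonneg (Real.exp_pos _).le hS.le
    have := aux_exp_half (ℓ i) (hℓ0 i) (hℓ1 i)
    nlinarith
  rw [ge_iff_le, hlog]
  linarith
end

section
/- Let smin(x) = −ln(Σ_i e^{−x_i}) and ∇smin(x)_i = e^{−x_i}/Σ_j e^{−x_j}. For all vectors x, ℓ ∈ ℝ^n with x, ℓ ≥ 0, the ℓ_1 distance of gradients satisfies ‖∇smin(x+ℓ) − ∇smin(x)‖_1 ≤ 2·∇smin(x)ᵀℓ. -/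
theorem stmt_9 (n : ℕ) (hn : 0 < n) (x ℓ : Fin n → ℝ)
    (hx : ∀ i, 0 ≤ x i) (hℓ : ∀ i, 0 ≤ ℓ i) :
    ∑ i, |Real.exp (-(x i + ℓ i)) / (∑ j, Real.exp (-(x j + ℓ j))) -
          Real.exp (-x i) / (∑ j, Real.exp (-x j))| ≤
      2 * ∑ i, (Real.exp (-x i) / ∑ j, Real.exp (-x j)) * ℓ i := by
  have : Nonempty (Fin n) := ⟨⟨0, hn⟩⟩
  have hne : (Finset.univ : Finset (Fin n)).Nonempty := Finset.univ_nonempty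
  set S : ℝ := ∑ j, Real.exp (-x j) with hS
  set S' : ℝ := ∑ j, Real.exp (-(x j + ℓ j)) with hS'
  have hSpos : 0 < S := Finset.sum_pos (fun j _ => Real.exp_pos _) hne
  have hS'pos : 0 < S' := Finset.sum_pos (fun j _ => Real.exp_pos _) hne
  have hS'le : S' ≤ S := by
    apply Finset.sum_le_sum
    intro j _
    exact Real.exp_le_exp.2 (by linarith [hℓ j])
  set p : Fin n → ℝ := fun i => Real.exp (-x i) / S with hp
  set p' : Fin n → ℝ := fun i => Real.exp (-(x i + ℓ i)) / S' with hp'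
  have hsum : ∑ i, (p' i - p i) = 0 := by
    rw [Finset.sum_sub_distrib]
    have h1 : ∑ i, p' i = 1 := by
      rw [hp', ← Finset.sum_div]
      exact div_self (ne_of_gt hS'pos)
    have h2 : ∑ i, p i = 1 := by
      rw [hp, ← Finset.sum_div]
      exact div_self (ne_of_gt hSpos)
    rw [h1, h2]; ring
  have habs : ∀ i, |p' i - p i| = (p' i - p i) + 2 * max (p i - p' i) 0 := by
    intro i
    rcases le_total (p i) (p' i) with h | h
    · rw [abs_of_nonneg (by linarith), max_eq_right (by linarith)]; ring
    · rw [abs_of_nonpos (by linarith), max_eq_left (by linarith)]; ring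
  have key : ∀ i, max (p i - p' i) 0 ≤ p i * ℓ i := by
    intro i
    have hple : p i * Real.exp (-ℓ i) ≤ p' i := by
      simp only [hp, hp']
      have : Real.exp (-(x i + ℓ i)) = Real.exp (-x i) * Real.exp (-ℓ i) := by
        rw [← Real.exp_add]; ring_nf
      rw [this]
      rw [div_mul_eq_mul_div]
      exact div_le_div_of_nonneg_left (by positivity) hS'pos hS'le
    have hexp : 1 - Real.exp (-ℓ i) ≤ ℓ i := by
      have := Real.add_one_le_exp (-ℓ i)
      linarith
    have hpnn : 0 ≤ p i := by positivity
    have : p i - p' i ≤ p i * ℓ i := by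
      have h1 : p i - p' i ≤ p i * (1 - Real.exp (-ℓ i)) := by nlinarith
      nlinarith
    exact max_le this (mul_nonneg hpnn (hℓ i))
  calc ∑ i, |p' i - p i| = ∑ i, ((p' i - p i) + 2 * max (p i - p' i) 0) := by
        exact Finset.sum_congr rfl (fun i _ => habs i)
    _ = 2 * ∑ i, max (p i - p' i) 0 := by
        rw [Finset.sum_add_distrib, hsum, ← Finset.mul_sum]; ring
    _ ≤ 2 * ∑ i, p i * ℓ i := by
        have := Finset.sum_le_sum (fun i (_ : i ∈ Finset.univ) => key i)
        linarith
end

section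
/- Let smin_c(x) = c·smin(x/c) with c ≥ 1. For all x, ℓ ∈ ℝ^n with x ≥ 0 and 0 ≤ ℓ_i ≤ 1 for all i, smin_c(x+ℓ) − smin_c(x) ≥ (1/2)·∇smin_c(x)ᵀℓ. -/
lemma aux_pt (c t : ℝ) (hc : 1 ≤ c) (ht0 : 0 ≤ t) (ht1 : t ≤ 1) :
    t / 2 ≤ c * (1 - Real.exp (-(t / c))) := by
  have hc0 : 0 < c := by linarith
  have hu0 : 0 ≤ t / c := div_nonneg ht0 hc0.le
  have hu1 : t / c ≤ 1 := by rw [div_le_one hc0]; linarith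
  have h1 : t / c + 1 ≤ Real.exp (t / c) := Real.add_one_le_exp _
  have h2 : Real.exp (-(t / c)) * Real.exp (t / c) = 1 := by
    rw [← Real.exp_add]; simp
  have h3 : 0 < Real.exp (-(t / c)) := Real.exp_pos _
  have h4 : Real.exp (-(t / c)) ≤ 1 - (t / c) / 2 := by
    nlinarith [mul_le_mul_of_nonneg_left h1 h3.le]
  have : c * (t / c) = t := by field_simp
  nlinarith

theorem stmt_13 (n : ℕ) (hn : 0 < n) (c : ℝ) (hc : 1 ≤ c) (x ℓ : Fin n → ℝ)
    (hx : ∀ i, 0 ≤ x i) (hℓ0 : ∀ i, 0 ≤ ℓ i) (hℓ1 : ∀ i, ℓ i ≤ 1) :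
    c * (-Real.log (∑ i, Real.exp (-((x i + ℓ i) / c)))) -
      c * (-Real.log (∑ i, Real.exp (-(x i / c)))) ≥
    (1 / 2) * ∑ i, (Real.exp (-(x i / c)) / ∑ j, Real.exp (-(x j / c))) * ℓ i := by
  have hc0 : 0 < c := by linarith
  have : Nonempty (Fin n) := Fin.pos_iff_nonempty.mp hn
  set S : ℝ := ∑ i, Real.exp (-(x i / c)) with hS
  set S' : ℝ := ∑ i, Real.exp (-((x i + ℓ i) / c)) with hS'
  have hSpos : 0 < S :=
    Finset.sum_pos (fun i _ => Real.exp_pos _) Finset.univ_nonempty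
  have hS'pos : 0 < S' :=
    Finset.sum_pos (fun i _ => Real.exp_pos _) Finset.univ_nonempty
  -- pointwise inequality summed
  have hsum : (1 / 2) * ∑ i, Real.exp (-(x i / c)) * ℓ i ≤ c * (S - S') := by
    rw [hS, hS', ← Finset.sum_sub_distrib, Finset.mul_sum, Finset.mul_sum]
    apply Finset.sum_le_sum
    intro i _
    have hexp : Real.exp (-((x i + ℓ i) / c)) =
        Real.exp (-(x i / c)) * Real.exp (-(ℓ i / c)) := by
      rw [← Real.exp_add]; ring_nf
    rw [hexp]
    have hpt := aux_pt c (ℓ i) hc (hℓ0 i) (hℓ1 i)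
    have he : 0 ≤ Real.exp (-(x i / c)) := (Real.exp_pos _).le
    nlinarith [mul_le_mul_of_nonneg_left hpt he]
  -- log inequality
  have hlog : Real.log (S' / S) ≤ S' / S - 1 :=
    Real.log_le_sub_one_of_pos (div_pos hS'pos hSpos)
  rw [Real.log_div hS'pos.ne' hSpos.ne'] at hlog
  -- rewrite RHS sum as a single fraction
  have hrhs : ∑ i, (Real.exp (-(x i / c)) / S) * ℓ i
      = (∑ i, Real.exp (-(x i / c)) * ℓ i) / S := by
    rw [Finset.sum_div]
    exact Finset.sum_congr rfl fun i _ => by ring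
  rw [ge_iff_le, hrhs]
  have h5 : (1 / 2) * ((∑ i, Real.exp (-(x i / c)) * ℓ i) / S) ≤ c * (S - S') / S := by
    rw [← mul_div_assoc]
    gcongr
  have h6 : c * (S - S') / S ≤ c * (Real.log S - Real.log S') := by
    have heq : c * (S - S') / S = c * (1 - S' / S) := by field_simp
    rw [heq]
    exact mul_le_mul_of_nonneg_left (by linarith) hc0.le
  have h7 : c * (Real.log S - Real.log S') = c * (-Real.log S') - c * (-Real.log S) := by
    ring
  linarith
end

section
/- Let smin_c(x) = c·smin(x/c) with c ≥ 1. For all x, ℓ ∈ ℝ^n with x, ℓ ≥ 0, ‖∇smin_c(x+ℓ) − ∇smin_c(x)‖_1 ≤ (2/c)·∇smin_c(x)ᵀℓ. -/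
theorem stmt_14 (n : ℕ) (hn : 0 < n) (c : ℝ) (hc : 1 ≤ c) (x ℓ : Fin n → ℝ)
    (hx : ∀ i, 0 ≤ x i) (hℓ : ∀ i, 0 ≤ ℓ i) :
    ∑ i, |Real.exp (-((x i + ℓ i) / c)) / (∑ j, Real.exp (-((x j + ℓ j) / c))) -
          Real.exp (-(x i / c)) / (∑ j, Real.exp (-(x j / c)))| ≤
      (2 / c) * ∑ i, (Real.exp (-(x i / c)) / ∑ j, Real.exp (-(x j / c))) * ℓ i := by
  have hc0 : 0 < c := lt_of_lt_of_le one_pos hc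
  set S : ℝ := ∑ j, Real.exp (-(x j / c)) with hS
  set T : ℝ := ∑ j, Real.exp (-((x j + ℓ j) / c)) with hT
  have hSpos : 0 < S := Finset.sum_pos (fun i _ => Real.exp_pos _)
    ⟨⟨0, hn⟩, Finset.mem_univ _⟩
  have hTpos : 0 < T := Finset.sum_pos (fun i _ => Real.exp_pos _)
    ⟨⟨0, hn⟩, Finset.mem_univ _⟩
  have hTS : T ≤ S := by
    apply Finset.sum_le_sum
    intro i _
    apply Real.exp_le_exp.2
    have : x i / c ≤ (x i + ℓ i) / c := by
      gcongr
      linarith [hℓ i]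
    linarith
  set p : Fin n → ℝ := fun i => Real.exp (-(x i / c)) / S with hp
  set q : Fin n → ℝ := fun i => Real.exp (-((x i + ℓ i) / c)) / T with hq
  have hsumP : ∑ i, p i = 1 := by
    simp only [hp, ← Finset.sum_div]
    exact div_self (ne_of_gt hSpos)
  have hsumQ : ∑ i, q i = 1 := by
    simp only [hq, ← Finset.sum_div]
    exact div_self (ne_of_gt hTpos)
  have key : ∀ i, p i - q i ≤ p i * (ℓ i / c) := by
    intro i
    have h1 : Real.exp (-((x i + ℓ i) / c)) / S ≤ q i := by
      simp only [hq]
      gcongr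
    have h2 : Real.exp (-((x i + ℓ i) / c)) = Real.exp (-(x i / c)) * Real.exp (-(ℓ i / c)) := by
      rw [← Real.exp_add]; ring_nf
    have h3 : 1 - Real.exp (-(ℓ i / c)) ≤ ℓ i / c := by
      have := Real.add_one_le_exp (-(ℓ i / c)); linarith
    have h4 : p i - q i ≤ Real.exp (-(x i / c)) / S * (1 - Real.exp (-(ℓ i / c))) := by
      have : Real.exp (-(x i / c)) / S * (1 - Real.exp (-(ℓ i / c)))
          = p i - Real.exp (-((x i + ℓ i) / c)) / S := by
        simp only [hp, h2]; ring
      rw [this]; linarith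
    calc p i - q i ≤ Real.exp (-(x i / c)) / S * (1 - Real.exp (-(ℓ i / c))) := h4
      _ ≤ Real.exp (-(x i / c)) / S * (ℓ i / c) := by
          apply mul_le_mul_of_nonneg_left h3 (by positivity)
      _ = p i * (ℓ i / c) := rfl
  have habs : ∀ t : ℝ, |t| = 2 * max t 0 - t := by
    intro t
    rcases le_total t 0 with h | h
    · rw [max_eq_right h, abs_of_nonpos h]; ring
    · rw [max_eq_left h, abs_of_nonneg h]; ring
  calc ∑ i, |q i - p i| = ∑ i, (2 * max (p i - q i) 0 - (p i - q i)) := by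
        refine Finset.sum_congr rfl fun i _ => ?_
        rw [abs_sub_comm, habs]
    _ = 2 * (∑ i, max (p i - q i) 0) - ((∑ i, p i) - ∑ i, q i) := by
        rw [Finset.sum_sub_distrib, Finset.mul_sum, Finset.sum_sub_distrib]
    _ = 2 * ∑ i, max (p i - q i) 0 := by rw [hsumP, hsumQ]; ring
    _ ≤ 2 * ∑ i, p i * (ℓ i / c) := by
        gcongr with i
        exact max_le (key i) (mul_nonneg (by positivity) (div_nonneg (hℓ i) hc0.le))
    _ = (2 / c) * ∑ i, p i * ℓ i := by
        rw [Finset.mul_sum, Finset.mul_sum]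
        refine Finset.sum_congr rfl fun i _ => ?_
        field_simp
        try ring
end
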